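/- Property P3.1 (greedy optimal allocation is feasible): The K-periodic cost sequence defined for j ≥ 1 by c_j = (1+Δ)·ε/K if ((j−1) mod K) < K/2 and c_j = (1−Δ)·ε/K otherwise (with c_j = 0 for j ≤ 0) satisfies all budget constraints: for every round i ≥ 1 and every k ∈ {1,…,K}, Σ_{j=i−k+1}^{i} c_j ≤ B_k. -/

import Mathlib

/-- Cumulative unlocked budget after a group has been active for `k` rounds:
`B_k = (ε/K)·((1+Δ)·min(k, K/2) + (1−Δ)·max(k − K/2, 0))`. -/
noncomputable def unlockedBudget (K : ℕ) (ε Δ : ℝ) (k : ℕ) : ℝ :=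
  (ε / K) * ((1 + Δ) * ((min k (K / 2) : ℕ) : ℝ) + (1 - Δ) * ((k - K / 2 : ℕ) : ℝ))
theorem stmt_6 (K : ℕ) (hK : Even K) (hK2 : 2 ≤ K) (ε Δ : ℝ) (hε : 0 < ε)
    (hΔ0 : 0 ≤ Δ) (hΔ1 : Δ ≤ 1) (c : ℤ → ℝ)
    (hc : ∀ j : ℤ, c j =
      if j ≤ 0 then 0
      else if (j - 1) % (K : ℤ) < ((K / 2 : ℕ) : ℤ) then (1 + Δ) * ε / K
      else (1 - Δ) * ε / K) :
    ∀ i : ℤ, 1 ≤ i → ∀ k : ℕ, 1 ≤ k → k ≤ K →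
      ∑ j ∈ Finset.Icc (i - (k : ℤ) + 1) i, c j ≤ unlockedBudget K ε Δ k := by
  intro i hi k hk1 hkK
  have hK0 : 0 < K := by omega
  have hKZ : (0:ℤ) < (K:ℤ) := by exact_mod_cast hK0
  have hKR : (0:ℝ) < (K:ℝ) := by exact_mod_cast hK0
  set a : ℝ := (1 + Δ) * ε / K with ha
  set b : ℝ := (1 - Δ) * ε / K with hb
  have hb0 : 0 ≤ b := by
    apply div_nonneg _ hKR.le
    nlinarith
  have hba : b ≤ a := by
    rw [ha, hb]
    apply div_le_div_of_nonneg_right _ hKR.le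
    nlinarith
  set S : Finset ℤ := Finset.Icc (i - (k:ℤ) + 1) i with hS
  have hScard : S.card = k := by
    rw [hS, Int.card_Icc]
    omega
  set P : ℤ → Prop := fun j => (j - 1) % (K:ℤ) < ((K/2 : ℕ) : ℤ) with hP
  have hsum : ∑ j ∈ S, c j ≤ ∑ j ∈ S, (if P j then a else b) := by
    apply Finset.sum_le_sum
    intro j _
    rw [hc j]
    by_cases h0 : j ≤ 0
    · simp only [h0, if_true]
      split <;> [exact le_trans hb0 hba; exact hb0]
    · simp only [h0, if_false]
      rfl
  classical
  rw [Finset.sum_ite, Finset.sum_const, Finset.sum_const, nsmul_eq_mul, nsmul_eq_mul] at hsum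
  set h : ℕ := (S.filter P).card with hh
  set l : ℕ := (S.filter (fun j => ¬ P j)).card with hl
  have hhl : h + l = k := by
    rw [hh, hl, Finset.card_filter_add_card_filter_not, hScard]
  -- h ≤ K/2 : residues are distinct in a window of length ≤ K
  have hhK : h ≤ K / 2 := by
    have := Finset.card_le_card_of_injOn (f := fun j => (j - 1) % (K:ℤ))
      (s := S.filter P) (t := Finset.Ico (0:ℤ) ((K/2 : ℕ) : ℤ))
      (by
        intro j hj
        rw [Finset.mem_coe, Finset.mem_filter] at hj
        rw [Finset.mem_coe, Finset.mem_Ico]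
        exact ⟨Int.emod_nonneg _ (by omega), hj.2⟩)
      (by
        intro j1 hj1 j2 hj2 heq
        simp only [Finset.mem_coe, Finset.mem_filter, hS, Finset.mem_Icc] at hj1 hj2
        have hdvd : (K:ℤ) ∣ (j1 - 1) - (j2 - 1) := Int.ModEq.dvd (Int.ModEq.symm heq)
        have habs : |(j1 - 1) - (j2 - 1)| < (K:ℤ) := by
          rw [abs_lt]
          have : (k:ℤ) ≤ (K:ℤ) := by exact_mod_cast hkK
          omega
        have := Int.eq_zero_of_abs_lt_dvd hdvd habs
        omega)
    rw [Int.card_Ico] at this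
    omega
  have hhk : h ≤ k := by omega
  -- final arithmetic
  set m : ℕ := min k (K / 2) with hm
  have hmk : m ≤ k := min_le_left _ _
  have hhm : h ≤ m := le_min hhk hhK
  have hsub : k - K / 2 = k - m := by omega
  have key : (h:ℝ) * a + (l:ℝ) * b ≤ (m:ℝ) * a + ((k:ℝ) - (m:ℝ)) * b := by
    have h1 : (h:ℝ) ≤ (m:ℝ) := by exact_mod_cast hhm
    have h2 : (l:ℝ) = (k:ℝ) - (h:ℝ) := by
      have : (h:ℝ) + (l:ℝ) = (k:ℝ) := by exact_mod_cast hhl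
      linarith
    nlinarith
  calc ∑ j ∈ S, c j ≤ (h:ℝ) * a + (l:ℝ) * b := hsum
    _ ≤ (m:ℝ) * a + ((k:ℝ) - (m:ℝ)) * b := key
    _ = unlockedBudget K ε Δ k := by
        rw [unlockedBudget, ← hm, hsub, Nat.cast_sub hmk, ha, hb]
        field_simp
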